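/- Let V be a finite set, let E ⊆ V × V be a set of directed edges, and let s ≠ t be vertices of V. Let f : V × V → ℕ satisfy: f(u, v) = 0 whenever (u, v) ∉ E; f(u, v) ≤ 1 for all u, v (unit capacities); and flow conservation Σ_{u ∈ V} f(u, v) = Σ_{w ∈ V} f(v, w) at every vertex v ∉ {s, t}. Let k = Σ_{v ∈ V} f(s, v) − Σ_{v ∈ V} f(v, s), and suppose k ≥ 0. Then there exist k pairwise edge-disjoint directed paths from s to t in (V, E), each of which uses only edges (u, v) with f(u, v) = 1. -/

import Mathlib

/-- A directed path in the graph with edge set `E`: a nonempty list of vertices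
whose consecutive pairs are edges. -/
def IsPath {V : Type*} (E : Set (V × V)) (p : List V) : Prop :=
  p ≠ [] ∧ List.Chain' (fun u w => (u, w) ∈ E) p

/-- The edges of a path, i.e. the consecutive pairs of vertices. -/
def pathEdges {V : Type*} (p : List V) : List (V × V) :=
  p.zip p.tail

lemma pathEdges_cons_cons {V : Type*} (a b : V) (l : List V) :
    pathEdges (a :: b :: l) = (a, b) :: pathEdges (b :: l) := rfl

lemma map_fst_pathEdges {V : Type*} : ∀ (p : List V),
    (pathEdges p).map Prod.fst = p.dropLast
  | [] => rfl
  | [_] => rfl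
  | a :: b :: l => by
      rw [pathEdges_cons_cons, List.map_cons, map_fst_pathEdges (b :: l)]
      rfl

lemma map_snd_pathEdges {V : Type*} (p : List V) :
    (pathEdges p).map Prod.snd = p.tail := by
  apply List.map_snd_zip
  cases p <;> simp

lemma chain'_mem_pathEdges {V : Type*} {r : V → V → Prop} :
    ∀ {p : List V}, p.Chain' r → ∀ e ∈ pathEdges p, r e.1 e.2
  | [], _, e, he => by simp [pathEdges] at he
  | [_], _, e, he => by simp [pathEdges] at he
  | a :: b :: l, h, e, he => by
      rw [pathEdges_cons_cons] at he
      simp only [List.Chain', List.isChain_cons_cons] at h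
      rcases List.mem_cons.1 he with rfl | he
      · exact h.1
      · exact chain'_mem_pathEdges h.2 e he

lemma sum_ite_mem_snd {α β : Type*} [Fintype α] [DecidableEq α] [DecidableEq β] :
    ∀ (L : List (α × β)), (L.map Prod.snd).Nodup → ∀ x : β,
      ∑ u : α, (if (u, x) ∈ L then (1:ℕ) else 0) = if x ∈ L.map Prod.snd then 1 else 0
  | [], _, x => by simp
  | e :: L, h, x => by
      rw [List.map_cons, List.nodup_cons] at h
      have ih := sum_ite_mem_snd L h.2 x
      have key : ∀ u : α, (if (u, x) ∈ e :: L then (1:ℕ) else 0) =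
          (if (u, x) = e then 1 else 0) + (if (u, x) ∈ L then 1 else 0) := by
        intro u
        by_cases h1 : (u, x) = e
        · have hnot : e ∉ L := fun hmem => h.1 (List.mem_map_of_mem (f := Prod.snd) hmem)
          simp [h1, hnot]
        · by_cases h2 : (u, x) ∈ L <;> simp [h1, h2]
      rw [Finset.sum_congr rfl (fun u _ => key u), Finset.sum_add_distrib, ih]
      have he : ∑ u : α, (if (u, x) = e then (1:ℕ) else 0) =
          if x = e.2 then 1 else 0 := by
        by_cases hx : x = e.2
        · rw [if_pos hx]
          have heq : ∀ u : α, ((u, x) = e) = (u = e.1) := by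
            intro u
            apply propext
            constructor
            · intro h'; exact congrArg Prod.fst h'
            · intro h'; exact Prod.ext_iff.2 ⟨h', hx⟩
          simp only [heq]
          simp
        · rw [if_neg hx]
          apply Finset.sum_eq_zero
          intro u _
          rw [if_neg]
          intro hc
          exact hx (congrArg Prod.snd hc)
      rw [he]
      rcases eq_or_ne x e.2 with rfl | hx
      · simp [h.1]
      · simp [List.map_cons, List.mem_cons, hx]

lemma sum_ite_mem_fst {α β : Type*} [Fintype β] [DecidableEq α] [DecidableEq β]
    (L : List (α × β)) (h : (L.map Prod.fst).Nodup) (x : α) :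
    ∑ w : β, (if (x, w) ∈ L then (1:ℕ) else 0) = if x ∈ L.map Prod.fst then 1 else 0 := by
  have h2 : ((L.map Prod.swap).map Prod.snd).Nodup := by
    rw [List.map_map]
    exact h
  have hmem : ∀ w : β, ((w, x) ∈ L.map Prod.swap) = ((x, w) ∈ L) := by
    intro w
    apply propext
    simp only [List.mem_map]
    constructor
    · rintro ⟨⟨a, b⟩, hab, heq⟩
      simp only [Prod.swap_prod_mk, Prod.mk.injEq] at heq
      rwa [← heq.1, ← heq.2]
    · intro hxw
      exact ⟨(x, w), hxw, rfl⟩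
  have := sum_ite_mem_snd (L.map Prod.swap) h2 x
  simp only [hmem] at this
  rw [this, List.map_map]
  rfl

lemma exists_nodup_chain' {V : Type*} {r : V → V → Prop} :
    ∀ (p : List V), p.Chain' r → p ≠ [] →
      ∃ q : List V, q.Nodup ∧ q.Chain' r ∧ q.head? = p.head? ∧ q.getLast? = p.getLast?
  | [], _, h => absurd rfl h
  | [a], _, _ => ⟨[a], by simp, List.isChain_singleton a, rfl, rfl⟩
  | a :: b :: l, h, _ => by
      simp only [List.Chain', List.isChain_cons_cons] at h
      obtain ⟨q, hnd, hch, hh, hl⟩ := exists_nodup_chain' (b :: l) h.2 (by simp)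
      by_cases ha : a ∈ q
      · obtain ⟨q1, q2, rfl⟩ := List.append_of_mem ha
        refine ⟨a :: q2, ?_, ?_, rfl, ?_⟩
        · exact ((List.suffix_append q1 (a :: q2)).sublist).nodup hnd
        · exact hch.suffix (List.suffix_append q1 (a :: q2))
        · rw [List.getLast?_cons_cons, ← hl, List.getLast?_append]
          cases hq2 : (a :: q2).getLast? with
          | none => simp [List.getLast?_eq_none_iff] at hq2
          | some y => simp [Option.or]
      · have hqne : q ≠ [] := by
          intro hq
          rw [hq] at hh
          simp at hh
        obtain ⟨c, q', rfl⟩ := List.exists_cons_of_ne_nil hqne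
        refine ⟨a :: c :: q', List.nodup_cons.2 ⟨ha, hnd⟩, ?_, rfl, ?_⟩
        · simp only [List.Chain', List.isChain_cons_cons]
          refine ⟨?_, hch⟩
          have : c = b := by simpa using hh
          rw [this]
          exact h.1
        · rw [List.getLast?_cons_cons, hl, List.getLast?_cons_cons]

lemma exists_flow_path {V : Type*} [Fintype V] [DecidableEq V] (s t : V) (hst : s ≠ t)
    (f : V × V → ℕ)
    (hcap : ∀ u w : V, f (u, w) ≤ 1)
    (hcons : ∀ x : V, x ≠ s → x ≠ t → ∑ u, f (u, x) = ∑ w, f (x, w))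
    (k : ℕ) (hk : 0 < k) (hval : ∑ x, f (s, x) = ∑ x, f (x, s) + k) :
    ∃ p : List V, p.Nodup ∧ p.Chain' (fun u w => f (u, w) = 1) ∧
      p.head? = some s ∧ p.getLast? = some t := by
  classical
  set r : V → V → Prop := fun u w => f (u, w) = 1 with hr
  have hreach : Relation.ReflTransGen r s t := by
    by_contra hnot
    set R : Finset V := Finset.univ.filter (fun v => Relation.ReflTransGen r s v) with hR
    have hsR : s ∈ R := by simp [hR]; exact Relation.ReflTransGen.refl
    have htR : t ∉ R := by simp [hR]; exact hnot
    have hclosed : ∀ u ∈ R, ∀ v, v ∉ R → f (u, v) = 0 := by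
      intro u hu v hv
      by_contra hf
      have hf1 : r u v := le_antisymm (hcap u v) (Nat.one_le_iff_ne_zero.2 hf)
      have hur : Relation.ReflTransGen r s u := by simpa [hR] using hu
      exact hv (by simp [hR]; exact hur.tail hf1)
    have E1 : ∑ x ∈ R, ∑ w, f (x, w) = (∑ x ∈ R, ∑ u, f (u, x)) + k := by
      have hcg : ∀ x ∈ R, ∑ w, f (x, w) = ∑ u, f (u, x) + (if x = s then k else 0) := by
        intro x hx
        by_cases hxs : x = s
        · subst hxs
          simp [hval]
        · have hxt : x ≠ t := fun h => htR (h ▸ hx)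
          simp [hxs, (hcons x hxs hxt).symm]
      rw [Finset.sum_congr rfl hcg, Finset.sum_add_distrib,
        Finset.sum_ite_eq' R s (fun _ => k), if_pos hsR]
    have E2 : ∑ x ∈ R, ∑ w, f (x, w) = ∑ x ∈ R, ∑ w ∈ R, f (x, w) := by
      apply Finset.sum_congr rfl
      intro x hx
      rw [← Finset.sum_add_sum_compl R (fun w => f (x, w))]
      have hz : ∑ w ∈ Rᶜ, f (x, w) = 0 :=
        Finset.sum_eq_zero (fun w hw => hclosed x hx w (Finset.mem_compl.1 hw))
      omega
    have E3 : ∑ x ∈ R, ∑ w ∈ R, f (x, w) ≤ ∑ x ∈ R, ∑ u, f (u, x) := by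
      rw [Finset.sum_comm]
      apply Finset.sum_le_sum
      intro x _
      exact Finset.sum_le_sum_of_subset (Finset.subset_univ R)
    omega
  obtain ⟨l, hc, hlast⟩ := List.exists_isChain_cons_of_relationReflTransGen hreach
  obtain ⟨q, hnd, hch, hh, hl⟩ := exists_nodup_chain' (s :: l) hc (by simp)
  refine ⟨q, hnd, hch, by rw [hh]; rfl, ?_⟩
  rw [hl, List.getLast?_eq_getLast (l := s :: l) (by simp), hlast]


/-- A directed path from `s` to `t`. -/
def IsPathFromTo {V : Type*} (E : Set (V × V)) (p : List V) (s t : V) : Prop :=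
  IsPath E p ∧ p.head? = some s ∧ p.getLast? = some t

/-- Two paths are edge-disjoint: no pair of consecutive vertices occurs as an edge
of both. -/
def EdgeDisjoint {V : Type*} (p q : List V) : Prop :=
  ∀ e : V × V, e ∈ pathEdges p → e ∉ pathEdges q

/-- In a unit-capacity network, an integral flow `f` of value `k ≥ 0`
from `s` to `t` (zero off the edge set, bounded by `1`, conserved away from `s` and
`t`) can be decomposed into `k` pairwise edge-disjoint directed `s`-`t` paths, each
using only edges carrying flow `1`.  The value condition
`Σ_v f(s,v) − Σ_v f(v,s) = k ≥ 0` is expressed as `Σ_v f(s,v) = Σ_v f(v,s) + k`. -/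
theorem flow_decomposition {V : Type*} [Fintype V] [DecidableEq V]
    (E : Set (V × V)) (s t : V) (hst : s ≠ t) (f : V × V → ℕ)
    (hE : ∀ u w : V, (u, w) ∉ E → f (u, w) = 0)
    (hcap : ∀ u w : V, f (u, w) ≤ 1)
    (hcons : ∀ x : V, x ≠ s → x ≠ t → ∑ u, f (u, x) = ∑ w, f (x, w))
    (k : ℕ) (hval : ∑ x, f (s, x) = ∑ x, f (x, s) + k) :
    ∃ P : Fin k → List V,
      (∀ m, IsPathFromTo E (P m) s t) ∧
      (∀ m m', m ≠ m' → EdgeDisjoint (P m) (P m')) ∧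
      (∀ m, ∀ e ∈ pathEdges (P m), f e = 1) := by
    classical
  induction k generalizing f with
  | zero =>
      exact ⟨Fin.elim0, fun m => m.elim0, fun m => m.elim0, fun m => m.elim0⟩
  | succ k ih =>
      obtain ⟨p, hnd, hch, hh, hl⟩ :=
        exists_flow_path s t hst f hcap hcons (k + 1) (Nat.succ_pos k) hval
      set S := pathEdges p with hSdef
      have hS1 : ∀ e ∈ S, f e = 1 := by
        intro e he
        have := chain'_mem_pathEdges hch e he
        simpa using this
      set f' : V × V → ℕ := fun e => if e ∈ S then 0 else f e with hf'def
      have hle : ∀ e, f' e ≤ f e := by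
        intro e
        by_cases he : e ∈ S <;> simp [hf'def, he]
      have hpoint : ∀ e, f' e + (if e ∈ S then 1 else 0) = f e := by
        intro e
        by_cases he : e ∈ S
        · simp [hf'def, he, hS1 e he]
        · simp [hf'def, he]
      have hfstnd : (S.map Prod.fst).Nodup := by
        rw [hSdef, map_fst_pathEdges]
        exact (List.dropLast_sublist p).nodup hnd
      have hsndnd : (S.map Prod.snd).Nodup := by
        rw [hSdef, map_snd_pathEdges]
        exact (List.tail_sublist p).nodup hnd
      -- structure of p
      obtain ⟨p1, rfl⟩ : ∃ p1, p = s :: p1 := by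
        cases p with
        | nil => simp at hh
        | cons a p1 =>
            have ha : a = s := by simpa using hh
            exact ⟨p1, by rw [ha]⟩
      have hp1ne : p1 ≠ [] := by
        intro h
        subst h
        have : s = t := by simpa using hl
        exact hst this
      have hpne : (s :: p1) ≠ [] := by simp
      have hglast : (s :: p1).getLast hpne = t := by
        have h3 := List.getLast?_eq_getLast hpne
        rw [h3] at hl
        exact Option.some.inj hl
      have htmem : t ∈ s :: p1 := hglast ▸ List.getLast_mem hpne
      -- membership facts
      have hs_tail : s ∉ (s :: p1).tail := (List.nodup_cons.1 hnd).1
      have ht_tail : t ∈ (s :: p1).tail := by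
        rcases List.mem_cons.1 htmem with h | h
        · exact absurd h.symm hst
        · exact h
      have hsplit : (s :: p1).dropLast ++ [t] = s :: p1 := by
        have h1 := List.dropLast_append_getLast hpne
        rw [hglast] at h1
        exact h1
      have ht_dl : t ∉ (s :: p1).dropLast := by
        intro hmem
        have hnd2 : ((s :: p1).dropLast ++ [t]).Nodup := by rw [hsplit]; exact hnd
        rw [List.nodup_append] at hnd2
        exact hnd2.2.2 t hmem t (List.mem_singleton_self t) rfl
      have hs_dl : s ∈ (s :: p1).dropLast := by
        obtain ⟨b, p2, rfl⟩ : ∃ b p2, p1 = b :: p2 :=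
          List.exists_cons_of_ne_nil hp1ne
        simp [List.dropLast]
      have hmem_iff : ∀ x, x ≠ s → x ≠ t → (x ∈ (s :: p1).tail ↔ x ∈ (s :: p1).dropLast) := by
        intro x hxs hxt
        constructor
        · intro hx
          have hxp : x ∈ (s :: p1) := List.mem_of_mem_tail hx
          rw [← hsplit] at hxp
          rcases List.mem_append.1 hxp with h | h
          · exact h
          · exact absurd (List.mem_singleton.1 h) hxt
        · intro hx
          have hxp : x ∈ (s :: p1) := (List.dropLast_sublist _).mem hx
          rcases List.mem_cons.1 hxp with h | h
          · exact absurd h hxs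
          · exact h
      -- sum identities
      have hsumIn : ∀ x, ∑ u, f' (u, x) + (if x ∈ (s :: p1).tail then 1 else 0)
          = ∑ u, f (u, x) := by
        intro x
        have h1 : ∑ u, (f' (u, x) + if (u, x) ∈ S then 1 else 0) = ∑ u, f (u, x) :=
          Finset.sum_congr rfl (fun u _ => hpoint (u, x))
        rw [Finset.sum_add_distrib, sum_ite_mem_snd S hsndnd x] at h1
        rwa [hSdef, map_snd_pathEdges] at h1
      have hsumOut : ∀ x, ∑ w, f' (x, w) + (if x ∈ (s :: p1).dropLast then 1 else 0)
          = ∑ w, f (x, w) := by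
        intro x
        have h1 : ∑ w, (f' (x, w) + if (x, w) ∈ S then 1 else 0) = ∑ w, f (x, w) :=
          Finset.sum_congr rfl (fun w _ => hpoint (x, w))
        rw [Finset.sum_add_distrib, sum_ite_mem_fst S hfstnd x] at h1
        rwa [hSdef, map_fst_pathEdges] at h1
      -- hypotheses for f'
      have hE' : ∀ u w : V, (u, w) ∉ E → f' (u, w) = 0 := by
        intro u w huw
        have := hle (u, w)
        have h0 := hE u w huw
        omega
      have hcap' : ∀ u w : V, f' (u, w) ≤ 1 := fun u w => le_trans (hle (u, w)) (hcap u w)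
      have hcons' : ∀ x : V, x ≠ s → x ≠ t → ∑ u, f' (u, x) = ∑ w, f' (x, w) := by
        intro x hxs hxt
        have h1 := hsumIn x
        have h2 := hsumOut x
        have h3 := hcons x hxs hxt
        have h4 := hmem_iff x hxs hxt
        by_cases hx : x ∈ (s :: p1).tail
        · rw [if_pos hx] at h1
          rw [if_pos (h4.1 hx)] at h2
          omega
        · rw [if_neg hx] at h1
          rw [if_neg (fun h => hx (h4.2 h))] at h2
          omega
      have hval' : ∑ x, f' (s, x) = ∑ x, f' (x, s) + k := by
        have h1 := hsumIn s
        have h2 := hsumOut s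
        rw [if_neg hs_tail] at h1
        rw [if_pos hs_dl] at h2
        omega
      obtain ⟨Q, hQ1, hQ2, hQ3⟩ := ih f' hE' hcap' hcons' hval'
      have hQS : ∀ i, ∀ e ∈ pathEdges (Q i), e ∉ S ∧ f e = 1 := by
        intro i e he
        have h1 := hQ3 i e he
        by_cases heS : e ∈ S
        · simp [hf'def, heS] at h1
        · refine ⟨heS, ?_⟩
          simpa [hf'def, heS] using h1
      refine ⟨Fin.cons (s :: p1) Q, ?_, ?_, ?_⟩
      · intro m
        induction m using Fin.cases with
        | zero =>
            rw [Fin.cons_zero]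
            refine ⟨⟨hpne, ?_⟩, hh, hl⟩
            exact hch.imp (fun u w h1 => by
              by_contra hne
              rw [hE u w hne] at h1
              exact one_ne_zero h1.symm)
        | succ i =>
            rw [Fin.cons_succ]
            exact hQ1 i
      · intro m m' hmm
        induction m using Fin.cases with
        | zero =>
            induction m' using Fin.cases with
            | zero => exact absurd rfl hmm
            | succ j =>
                rw [Fin.cons_zero, Fin.cons_succ]
                intro e he hcontra
                exact (hQS j e hcontra).1 he
        | succ i =>
            induction m' using Fin.cases with
            | zero =>
                rw [Fin.cons_zero, Fin.cons_succ]
                intro e he hcontra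
                exact (hQS i e he).1 hcontra
            | succ j =>
                rw [Fin.cons_succ, Fin.cons_succ]
                exact hQ2 i j (fun h => hmm (congrArg Fin.succ h))
      · intro m
        induction m using Fin.cases with
        | zero =>
            rw [Fin.cons_zero]
            exact hS1
        | succ i =>
            rw [Fin.cons_succ]
            exact fun e he => (hQS i e he).2
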